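/- arXiv:2404.06624 — 3 statements merged into one kernel-verified Lean document; each statement's English description precedes it below -/
import Mathlib

section
/- Feasibility (sufficiency direction of Proposition 1): if for each t the control satisfies ρC̄ ≤ γ_t and c_t ≤ γ_t ≤ Γ_t where Γ_t := ρC̄ + C̄(1-ρ)W − Ω_t and Ω_t := max_{0≤k≤min(t,W-1)} ∑_{i=1}^k (c_{t-i} − ρC̄), and if future consumptions satisfy c_{t'} ≤ ρC̄ for t' > t, then the sliding-window constraint ∑ over any window of W periods containing t of c_i ≤ W·C̄ holds for every window whose last W slots include period t. -/
/-- Ω_t := max_{0 ≤ k ≤ min(t,W-1)} ∑_{i=1}^k (c_{t-i} - ρ·C̄). -/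
noncomputable def Omega (c : ℕ → ℝ) (ρ Cb : ℝ) (W t : ℕ) : ℝ :=
  (Finset.range (min t (W - 1) + 1)).sup'
    (Finset.nonempty_range_iff.mpr (Nat.succ_ne_zero _))
    (fun k => ∑ i ∈ Finset.Icc 1 k, (c (t - i) - ρ * Cb))

/-- Budget Γ_t := ρC̄ + C̄(1-ρ)W - Ω_t. -/
noncomputable def Gamma (c : ℕ → ℝ) (ρ Cb : ℝ) (W t : ℕ) : ℝ :=
  ρ * Cb + Cb * (1 - ρ) * W - Omega c ρ Cb W t

theorem stmt_9 (c : ℕ → ℝ) (hc : ∀ s, 0 ≤ c s)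
    (ρ Cb : ℝ) (hρ : ρ ∈ Set.Icc (0:ℝ) 1) (hCb : 0 < Cb)
    (W : ℕ) (hW : 1 ≤ W) (t : ℕ)
    (hct : c t ≤ Gamma c ρ Cb W t)
    (hfut : ∀ t', t < t' → c t' ≤ ρ * Cb) :
    ∀ k : ℕ, k ≤ W - 1 →
      (∑ i ∈ Finset.Icc 1 (min t k), c (t - i)) + c t +
        (∑ i ∈ Finset.Icc 1 (W - 1 - k), c (t + i)) ≤ W * Cb := by
  intro k hk
  obtain ⟨hρ0, hρ1⟩ := hρ
  have hρCb : 0 ≤ ρ * Cb := mul_nonneg hρ0 hCb.le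
  -- past sum bound via Omega
  have hmem : min t k ∈ Finset.range (min t (W - 1) + 1) := by
    simp only [Finset.mem_range, Nat.lt_succ_iff]
    exact min_le_min le_rfl hk
  have hΩ : ∑ i ∈ Finset.Icc 1 (min t k), (c (t - i) - ρ * Cb) ≤ Omega c ρ Cb W t := by
    rw [Omega]
    exact Finset.le_sup' (fun k => ∑ i ∈ Finset.Icc 1 k, (c (t - i) - ρ * Cb)) hmem
  have hpast : ∑ i ∈ Finset.Icc 1 (min t k), c (t - i)
      ≤ Omega c ρ Cb W t + (min t k : ℝ) * (ρ * Cb) := by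
    have := Finset.sum_sub_distrib (f := fun i => c (t - i))
      (g := fun _ => ρ * Cb) (s := Finset.Icc 1 (min t k))
    have hcard : (Finset.Icc 1 (min t k)).card = min t k := by
      simp [Nat.card_Icc]
    calc ∑ i ∈ Finset.Icc 1 (min t k), c (t - i)
        = (∑ i ∈ Finset.Icc 1 (min t k), (c (t - i) - ρ * Cb))
          + (min t k : ℝ) * (ρ * Cb) := by
          rw [Finset.sum_sub_distrib, Finset.sum_const, hcard]
          ring_nf
          push_cast
          ring
      _ ≤ _ := by linarith
  -- future sum bound
  have hfutsum : ∑ i ∈ Finset.Icc 1 (W - 1 - k), c (t + i)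
      ≤ ((W - 1 - k : ℕ) : ℝ) * (ρ * Cb) := by
    have : ∑ i ∈ Finset.Icc 1 (W - 1 - k), c (t + i)
        ≤ ∑ _i ∈ Finset.Icc 1 (W - 1 - k), ρ * Cb := by
      apply Finset.sum_le_sum
      intro i hi
      have hi1 : 1 ≤ i := (Finset.mem_Icc.mp hi).1
      exact hfut _ (by omega)
    simpa [Nat.card_Icc, mul_comm] using this
  -- counting
  have hcount : (min t k : ℝ) + 1 + ((W - 1 - k : ℕ) : ℝ) ≤ (W : ℝ) := by
    have h1 : min t k + 1 + (W - 1 - k) ≤ W := by omega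
    exact_mod_cast h1
  have hΓ := hct
  rw [Gamma] at hΓ
  nlinarith [hΩ, hpast, hfutsum, hcount, hρCb, hρ1, hCb.le,
    mul_nonneg (sub_nonneg.mpr hρ1) hCb.le]
end

section
/- Necessity direction of Proposition 1: if c_t > Γ_t := ρC̄ + C̄(1-ρ)W − Ω_t, and all future consumptions equal ρC̄ (the minimum allowed), then at least one sliding-window constraint containing period t is violated, i.e., there exists k with 0 ≤ k ≤ min(t, W-1) such that ∑_{i=1}^{k} c_{t-i} + c_t + (W-1-k)ρC̄ > W·C̄. -/
theorem stmt_10 (c : ℕ → ℝ) (hc : ∀ s, 0 ≤ c s)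
    (ρ Cb : ℝ) (hρ : ρ ∈ Set.Icc (0:ℝ) 1) (hCb : 0 < Cb)
    (W : ℕ) (hW : 1 ≤ W) (t : ℕ)
    (hgt : Gamma c ρ Cb W t < c t)
    (hfut : ∀ i : ℕ, 1 ≤ i → c (t + i) = ρ * Cb) :
    ∃ k : ℕ, k ≤ min t (W - 1) ∧
      W * Cb < (∑ i ∈ Finset.Icc 1 k, c (t - i)) + c t + (W - 1 - k : ℕ) * (ρ * Cb) := by
  obtain ⟨k, hk, hke⟩ := Finset.exists_mem_eq_sup'
    (Finset.nonempty_range_iff.mpr (Nat.succ_ne_zero (min t (W - 1))))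
    (fun k => ∑ i ∈ Finset.Icc 1 k, (c (t - i) - ρ * Cb))
  have hkle : k ≤ min t (W - 1) := Nat.lt_succ_iff.mp (Finset.mem_range.mp hk)
  refine ⟨k, hkle, ?_⟩
  have hΩ : Omega c ρ Cb W t = (∑ i ∈ Finset.Icc 1 k, c (t - i)) - k * (ρ * Cb) := by
    rw [Omega, hke, Finset.sum_sub_distrib, Finset.sum_const, Nat.card_Icc]
    simp [nsmul_eq_mul]
  have hkW : k ≤ W - 1 := le_trans hkle (min_le_right _ _)
  have hcast : ((W - 1 - k : ℕ) : ℝ) = (W : ℝ) - 1 - k := by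
    have h1 : ((W - 1 : ℕ) : ℝ) = (W : ℝ) - 1 := by
      push_cast [Nat.cast_sub hW]; ring
    rw [Nat.cast_sub hkW, h1]
  have hgt' : ρ * Cb + Cb * (1 - ρ) * W - Omega c ρ Cb W t < c t := hgt
  rw [hΩ] at hgt'
  rw [hcast]
  nlinarith [hgt']
end

section
/- If the per-period consumptions satisfy c_t ≤ γ_t for all t and γ_t ≤ Γ_t where Γ_t is the exact budget with guaranteed ratio ρ, and additionally γ_t ≥ ρC̄, then the conservative budget policy γ_t ≤ Γ̃_t also guarantees the sliding-window EMF constraint, since Γ̃_t ≤ Γ_t. -/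
/-- Conservative Ω̃_t := ∑_{i=1}^{min(t,W-1)} max(c_{t-i} - ρ·C̄, 0). -/
noncomputable def OmegaTilde (c : ℕ → ℝ) (ρ Cb : ℝ) (W t : ℕ) : ℝ :=
  ∑ i ∈ Finset.Icc 1 (min t (W - 1)), max (c (t - i) - ρ * Cb) 0

/-- Conservative budget Γ̃_t. -/
noncomputable def GammaTilde (c : ℕ → ℝ) (ρ Cb : ℝ) (W t : ℕ) : ℝ :=
  ρ * Cb + Cb * (1 - ρ) * W - OmegaTilde c ρ Cb W t

lemma omegaTilde_reindex (c : ℕ → ℝ) (ρ Cb : ℝ) (W s : ℕ) (hW : 1 ≤ W) :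
    ∑ i ∈ Finset.Icc (s + 2 - W) s, max (c i - ρ * Cb) 0
      = OmegaTilde c ρ Cb W (s + 1) := by
  unfold OmegaTilde
  apply Finset.sum_nbij' (i := fun i => s + 1 - i) (j := fun j => s + 1 - j)
  · intro a ha; simp only [Finset.mem_Icc] at ha ⊢; omega
  · intro a ha; simp only [Finset.mem_Icc] at ha ⊢; omega
  · intro a ha; simp only [Finset.mem_Icc] at ha; omega
  · intro a ha; simp only [Finset.mem_Icc] at ha; omega
  · intro a ha
    simp only [Finset.mem_Icc] at ha
    have h : s + 1 - (s + 1 - a) = a := by omega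
    rw [h]

theorem stmt_16 (c γ : ℕ → ℝ) (hc : ∀ t, 0 ≤ c t) (hcγ : ∀ t, c t ≤ γ t)
    (ρ Cb : ℝ) (hρ : ρ ∈ Set.Icc (0:ℝ) 1) (hCb : 0 < Cb)
    (W : ℕ) (hW : 1 ≤ W)
    (hγ : ∀ t, ρ * Cb ≤ γ t ∧ γ t ≤ GammaTilde c ρ Cb W t) :
    ∀ t : ℕ, ∑ i ∈ Finset.Icc (t + 1 - W) t, c i ≤ W * Cb := by
  obtain ⟨hρ0, hρ1⟩ := hρ
  have hρCb : 0 ≤ ρ * Cb := mul_nonneg hρ0 hCb.le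
  have hW1 : (1:ℝ) ≤ (W:ℝ) := by exact_mod_cast hW
  intro t
  match t with
  | 0 =>
    have h0 : (0:ℕ) + 1 - W = 0 := by omega
    rw [h0, Finset.Icc_self, Finset.sum_singleton]
    have hΩ : OmegaTilde c ρ Cb W 0 = 0 := by
      unfold OmegaTilde
      simp
    have := (hγ 0).2
    unfold GammaTilde at this
    rw [hΩ] at this
    have h1 : c 0 ≤ ρ * Cb + Cb * (1 - ρ) * W := by
      linarith [hcγ 0]
    nlinarith
  | Nat.succ s =>
    set t := s + 1 with ht
    have ha : t + 1 - W ≤ s + 1 := by omega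
    rw [Finset.sum_Icc_succ_top ha]
    have hre := omegaTilde_reindex c ρ Cb W s hW
    have heq : t + 1 - W = s + 2 - W := by omega
    rw [heq]
    have hsum : ∑ i ∈ Finset.Icc (s + 2 - W) s, c i
        ≤ OmegaTilde c ρ Cb W t + ((Finset.Icc (s + 2 - W) s).card : ℝ) * (ρ * Cb) := by
      rw [ht, ← hre]
      calc ∑ i ∈ Finset.Icc (s + 2 - W) s, c i
          ≤ ∑ i ∈ Finset.Icc (s + 2 - W) s, (max (c i - ρ * Cb) 0 + ρ * Cb) := by
            apply Finset.sum_le_sum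
            intro i _
            have := le_max_left (c i - ρ * Cb) 0
            linarith
        _ = _ := by
            rw [Finset.sum_add_distrib, Finset.sum_const, nsmul_eq_mul]
    have hcard : ((Finset.Icc (s + 2 - W) s).card : ℝ) ≤ (W : ℝ) - 1 := by
      have h1 : (Finset.Icc (s + 2 - W) s).card ≤ W - 1 := by
        rw [Nat.card_Icc]; omega
      have : ((Finset.Icc (s + 2 - W) s).card : ℝ) ≤ ((W - 1 : ℕ) : ℝ) := by
        exact_mod_cast h1
      rwa [Nat.cast_sub hW, Nat.cast_one] at this
    have hct : c t ≤ ρ * Cb + Cb * (1 - ρ) * W - OmegaTilde c ρ Cb W t := by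
      have := (hγ t).2
      unfold GammaTilde at this
      linarith [hcγ t]
    have hcardmul : ((Finset.Icc (s + 2 - W) s).card : ℝ) * (ρ * Cb)
        ≤ ((W : ℝ) - 1) * (ρ * Cb) := by
      exact mul_le_mul_of_nonneg_right hcard hρCb
    have : (s : ℝ) + 1 = (t : ℝ) := by rw [ht]; push_cast; ring
    nlinarith [hsum, hcardmul, hct]
end
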